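/- Let A be a Stone topological L-algebra. Then A is residually finite (i.e., profinite) if and only if for every clopen subset K ⊆ A the set {p : A × A | σ_K p.1 p.2} is a clopen subset of A × A. -/

import Mathlib

open FirstOrder Language Structure

/-- An elementary translation of an `L`-algebra `A`. -/
def IsElemTranslation (L : FirstOrder.Language) {A : Type*} [L.Structure A]
    (g : Function.End A) : Prop :=
  ∃ (n : ℕ) (f : L.Functions n) (i : Fin n) (v : Fin n → A),
    g = fun a => funMap f (Function.update v i a)

/-- The translation monoid `M(A)`. -/
def translationMonoid (L : FirstOrder.Language) (A : Type*) [L.Structure A] :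
    Submonoid (Function.End A) :=
  Submonoid.closure {g | IsElemTranslation L g}

/-- The syntactic congruence of `K ⊆ A`. -/
def syntCong (L : FirstOrder.Language) {A : Type*} [L.Structure A] (K : Set A)
    (a b : A) : Prop :=
  ∀ g ∈ translationMonoid L A, (g a ∈ K ↔ g b ∈ K)

/-- Residual finiteness of a topological `L`-algebra. -/
def ResiduallyFinite (L : FirstOrder.Language) (A : Type*) [TopologicalSpace A]
    [L.Structure A] : Prop :=
  ∀ a b : A, a ≠ b →
    ∃ (F : Type) (_ : Finite F) (iT : TopologicalSpace F) (iS : L.Structure F),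
      letI := iT; letI := iS;
      DiscreteTopology F ∧ ∃ φ : A →[L] F, Continuous (φ : A → F) ∧ φ a ≠ φ b

namespace ProfiniteAux

variable {L : FirstOrder.Language}

section Alg
variable {A : Type*} [L.Structure A]

lemma elem_mem {n : ℕ} (f : L.Functions n) (i : Fin n) (v : Fin n → A) :
    (fun a => funMap f (Function.update v i a) : Function.End A) ∈ translationMonoid L A :=
  Submonoid.subset_closure ⟨n, f, i, v, rfl⟩

lemma syntCong_refl (K : Set A) (a : A) : syntCong L K a a := fun _ _ => Iff.rfl

lemma syntCong_symm {K : Set A} {a b : A} (h : syntCong L K a b) : syntCong L K b a :=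
  fun g hg => (h g hg).symm

lemma syntCong_trans {K : Set A} {a b c : A} (h1 : syntCong L K a b) (h2 : syntCong L K b c) :
    syntCong L K a c := fun g hg => (h1 g hg).trans (h2 g hg)

lemma syntCong_translate {K : Set A} {a b : A} (h : syntCong L K a b) {g : Function.End A}
    (hg : g ∈ translationMonoid L A) : syntCong L K (g a) (g b) :=
  fun g' hg' => h (g' * g) (mul_mem hg' hg)

lemma syntCong_funMap {K : Set A} {n : ℕ} (f : L.Functions n) {v w : Fin n → A}
    (h : ∀ i, syntCong L K (v i) (w i)) : syntCong L K (funMap f v) (funMap f w) := by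
  have main : ∀ s : Finset (Fin n),
      syntCong L K (funMap f v) (funMap f (fun j => if j ∈ s then w j else v j)) := by
    intro s
    induction s using Finset.induction_on with
    | empty => simpa using syntCong_refl K (funMap f v)
    | @insert i s hi ih =>
      set u : Fin n → A := fun j => if j ∈ s then w j else v j with hu
      have h1 : (fun j => if j ∈ insert i s then w j else v j) = Function.update u i (w i) := by
        funext j
        by_cases hj : j = i
        · subst hj; simp [u]
        · simp [Function.update, hj, Finset.mem_insert, u]
      have h2 : u = Function.update u i (v i) := by
        funext j
        by_cases hj : j = i
        · subst hj; simp [u, hi]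
        · simp [Function.update, hj]
      rw [h1]
      refine syntCong_trans ih ?_
      nth_rewrite 1 [h2]
      exact syntCong_translate (h i) (elem_mem f i u)
  have := main Finset.univ
  simpa using this

lemma hom_translate {F : Type*} [L.Structure F] (φ : A →[L] F) {g : Function.End A}
    (hg : g ∈ translationMonoid L A) : ∀ x y : A, φ x = φ y → φ (g x) = φ (g y) := by
  induction hg using Submonoid.closure_induction with
  | mem g hgs =>
    obtain ⟨n, f, i, v, rfl⟩ := hgs
    intro x y hxy
    show φ (funMap f (Function.update v i x)) = φ (funMap f (Function.update v i y))
    rw [φ.map_fun, φ.map_fun, Function.comp_update, Function.comp_update, hxy]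
  | one => exact fun x y h => h
  | mul g h hgm hhm ihg ihh => exact fun x y hxy => ihg _ _ (ihh _ _ hxy)

/-- Transport a structure along an equivalence, trivializing relations. -/
def transportStructure {M N : Type*} [L.Structure M] (e : M ≃ N) : L.Structure N :=
  ⟨fun f x => e (funMap f (fun i => e.symm (x i))), fun _ _ => True⟩

/-- The equivalence as a homomorphism onto the transported structure. -/
def transportHom {M N : Type*} [L.Structure M] (e : M ≃ N) :
    @FirstOrder.Language.Hom L M N _ (transportStructure e) :=
  letI : L.Structure N := transportStructure e
  { toFun := e
    map_fun' := fun {_} f x => congrArg (fun z => e (funMap f z))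
      (funext fun i => (e.symm_apply_apply (x i)).symm)
    map_rel' := fun {_} _ _ _ => trivial }

end Alg

section Top
variable {A : Type*} [TopologicalSpace A] [L.Structure A]

lemma combine (m : ℕ) (Fs : Fin m → Type) (fin : ∀ j, Finite (Fs j))
    (str : ∀ j, L.Structure (Fs j))
    (φs : ∀ j, @FirstOrder.Language.Hom L A (Fs j) _ (str j))
    (cont : ∀ j, @Continuous A (Fs j) _ ⊥ (φs j)) :
    ∃ (F : Type) (_ : Finite F) (iS : L.Structure F) (φ : @FirstOrder.Language.Hom L A F _ iS),
      @Continuous A F _ ⊥ φ ∧ ∀ x y : A, φ x = φ y → ∀ j, φs j x = φs j y := by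
  letI := str
  letI : ∀ j, TopologicalSpace (Fs j) := fun _ => ⊥
  haveI : ∀ j, DiscreteTopology (Fs j) := fun _ => ⟨rfl⟩
  letI strP : L.Structure (∀ j, Fs j) :=
    ⟨fun f v j => funMap f (fun i => v i j), fun _ _ => True⟩
  refine ⟨∀ j, Fs j, inferInstance, strP,
    ⟨fun a j => φs j a, ?_, fun _ _ _ => trivial⟩, ?_, ?_⟩
  · intro n f x
    funext j
    exact (φs j).map_fun f x
  · have hd : DiscreteTopology (∀ j, Fs j) := inferInstance
    have heq : (inferInstance : TopologicalSpace (∀ j, Fs j)) = ⊥ := hd.eq_bot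
    exact heq ▸ (continuous_pi fun j => cont j)
  · intro x y h j
    exact congrFun h j

lemma sep_point (hRF : ResiduallyFinite L A) {a : A} {C : Set A} (hC : IsCompact C)
    (ha : a ∉ C) :
    ∃ (F : Type) (_ : Finite F) (iS : L.Structure F) (φ : @FirstOrder.Language.Hom L A F _ iS),
      @Continuous A F _ ⊥ φ ∧ ∀ x ∈ C, φ x ≠ φ a := by
  have hsep : ∀ b : C, ∃ (F : Type) (_ : Finite F) (iS : L.Structure F)
      (φ : @FirstOrder.Language.Hom L A F _ iS),
      @Continuous A F _ ⊥ φ ∧ φ a ≠ φ (b : A) := by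
    intro b
    have hab : a ≠ (b : A) := fun h => ha (h ▸ b.2)
    obtain ⟨F, fin, iT, iS, hd, φ, hφc, hφ⟩ := hRF a b hab
    exact ⟨F, fin, iS, φ, hd.eq_bot ▸ hφc, hφ⟩
  choose F fin str φ cont hne using hsep
  let V : C → Set A := fun b => φ b ⁻¹' {φ b a}ᶜ
  have hVopen : ∀ b, IsOpen (V b) := by
    intro b
    have h1 : @IsOpen (F b) ⊥ ({φ b a}ᶜ) := @isOpen_discrete _ ⊥ (discreteTopology_bot _) _
    exact @Continuous.isOpen_preimage A (F b) _ ⊥ _ (cont b) _ h1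
  have hcov : C ⊆ ⋃ b : C, V b := by
    intro x hx
    exact Set.mem_iUnion.2 ⟨⟨x, hx⟩, (hne ⟨x, hx⟩).symm⟩
  obtain ⟨t, ht⟩ := hC.elim_finite_subcover V hVopen hcov
  let e := Fintype.equivFin ↥t
  obtain ⟨F', fin', str', Φ, contΦ, hΦ⟩ :=
    combine (Fintype.card ↥t) (fun j => F ((e.symm j) : ↥t).val)
      (fun j => fin _) (fun j => str _) (fun j => φ _) (fun j => cont _)
  refine ⟨F', fin', str', Φ, contΦ, ?_⟩
  intro x hx heq
  obtain ⟨b, hb, hxV⟩ := Set.mem_iUnion₂.1 (ht hx)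
  have h2 := hΦ x a heq (e ⟨b, hb⟩)
  rw [Equiv.symm_apply_apply] at h2
  exact hxV h2

lemma exists_sat [CompactSpace A] (hRF : ResiduallyFinite L A) {K : Set A}
    (hK : IsClopen K) :
    ∃ (F : Type) (_ : Finite F) (iS : L.Structure F) (φ : @FirstOrder.Language.Hom L A F _ iS),
      @Continuous A F _ ⊥ φ ∧ ∀ x y : A, φ x = φ y → x ∈ K → y ∈ K := by
  have hCc : IsCompact Kᶜ := hK.isOpen.isClosed_compl.isCompact
  have hsep : ∀ a : K, ∃ (F : Type) (_ : Finite F) (iS : L.Structure F)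
      (φ : @FirstOrder.Language.Hom L A F _ iS),
      @Continuous A F _ ⊥ φ ∧ ∀ x ∈ Kᶜ, φ x ≠ φ (a : A) :=
    fun a => sep_point hRF hCc (fun h => h a.2)
  choose F fin str φ cont hsp using hsep
  let W : K → Set A := fun a => φ a ⁻¹' {φ a (a : A)}
  have hWopen : ∀ a, IsOpen (W a) := by
    intro a
    have h1 : @IsOpen (F a) ⊥ ({φ a (a : A)}) := @isOpen_discrete _ ⊥ (discreteTopology_bot _) _
    exact @Continuous.isOpen_preimage A (F a) _ ⊥ _ (cont a) _ h1
  have hcov : K ⊆ ⋃ a : K, W a := by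
    intro x hx
    exact Set.mem_iUnion.2 ⟨⟨x, hx⟩, rfl⟩
  obtain ⟨t, ht⟩ := hK.isClosed.isCompact.elim_finite_subcover W hWopen hcov
  let e := Fintype.equivFin ↥t
  obtain ⟨F', fin', str', Φ, contΦ, hΦ⟩ :=
    combine (Fintype.card ↥t) (fun j => F ((e.symm j) : ↥t).val)
      (fun j => fin _) (fun j => str _) (fun j => φ _) (fun j => cont _)
  refine ⟨F', fin', str', Φ, contΦ, ?_⟩
  intro x y hxy hxK
  obtain ⟨aa, haa, hxW⟩ := Set.mem_iUnion₂.1 (ht hxK)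
  by_contra hyK
  have h2 := hΦ x y hxy (e ⟨aa, haa⟩)
  rw [Equiv.symm_apply_apply] at h2
  exact hsp aa y hyK (by rw [← h2]; exact hxW)

end Top

end ProfiniteAux

open ProfiniteAux in
/-- A Stone topological `L`-algebra is profinite iff the syntactic congruence of every
clopen subset is clopen. -/
theorem residuallyFinite_iff_syntCong_isClopen (L : FirstOrder.Language) {A : Type*}
    [TopologicalSpace A] [L.Structure A]
    [CompactSpace A] [T2Space A] [TotallyDisconnectedSpace A]
    (hA : ∀ (n : ℕ) (f : L.Functions n), Continuous fun v : Fin n → A => funMap f v) :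
    ResiduallyFinite L A ↔
      ∀ K : Set A, IsClopen K → IsClopen {p : A × A | syntCong L K p.1 p.2} := by
  constructor
  · -- residually finite ⇒ syntactic congruences of clopens are clopen
    intro hRF K hK
    obtain ⟨F, fin, str, φ, cont, hsat⟩ := exists_sat hRF hK
    letI : L.Structure F := str
    letI : TopologicalSpace F := ⊥
    haveI : DiscreteTopology F := ⟨rfl⟩
    have hker : ∀ x y : A, φ x = φ y → syntCong L K x y := by
      intro x y h g hg
      have h' := hom_translate φ hg x y h
      exact ⟨fun hx => hsat _ _ h' hx, fun hy => hsat _ _ h'.symm hy⟩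
    have hset : {p : A × A | syntCong L K p.1 p.2} =
        (fun p : A × A => (φ p.1, φ p.2)) ⁻¹'
          ((fun p : A × A => (φ p.1, φ p.2)) '' {p : A × A | syntCong L K p.1 p.2}) := by
      refine Set.Subset.antisymm (Set.subset_preimage_image _ _) ?_
      rintro ⟨x, y⟩ ⟨⟨u, v⟩, huv, heq⟩
      have h1 : φ u = φ x := congrArg Prod.fst heq
      have h2 : φ v = φ y := congrArg Prod.snd heq
      exact syntCong_trans (syntCong_symm (hker u x h1))
        (syntCong_trans huv (hker v y h2))
    rw [hset]
    exact (isClopen_discrete _).preimage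
      ((cont.comp continuous_fst).prodMk (cont.comp continuous_snd))
  · -- clopen syntactic congruences ⇒ residually finite
    intro hcl a b hab
    obtain ⟨K, hK, haK, hbK⟩ := exists_isClopen_of_totally_separated hab
    have hS := hcl K hK
    let s : Setoid A := ⟨syntCong L K, ⟨syntCong_refl K, syntCong_symm, syntCong_trans⟩⟩
    have hopen : ∀ q : Quotient s, IsOpen {q} := by
      intro q
      obtain ⟨c, rfl⟩ := Quotient.exists_rep q
      rw [← isQuotientMap_quotient_mk'.isOpen_preimage]
      have hpre : (Quotient.mk' : A → Quotient s) ⁻¹' {Quotient.mk s c} =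
          (fun x : A => (x, c)) ⁻¹' {p : A × A | syntCong L K p.1 p.2} := by
        ext x
        simp only [Set.mem_preimage, Set.mem_singleton_iff, Set.mem_setOf_eq]
        exact ⟨fun h => Quotient.exact h, fun h => Quotient.sound h⟩
      rw [hpre]
      exact hS.2.preimage (continuous_id.prodMk continuous_const)
    haveI : DiscreteTopology (Quotient s) := discreteTopology_iff_isOpen_singleton.2 hopen
    haveI : Finite (Quotient s) := finite_of_compact_of_discrete
    letI strQ : L.Structure (Quotient s) :=
      ⟨fun f x => Quotient.mk s (funMap f (fun i => (x i).out)), fun _ _ => True⟩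
    have hmk : ∀ {n : ℕ} (f : L.Functions n) (x : Fin n → A),
        Quotient.mk s (funMap f x) = funMap f (fun i => Quotient.mk s (x i)) := by
      intro n f x
      refine Quotient.sound ?_
      exact syntCong_funMap f (fun i => Quotient.exact (s := s) (Quotient.out_eq (Quotient.mk s (x i))).symm)
    let φ₀ : A →[L] Quotient s :=
      { toFun := Quotient.mk s
        map_fun' := fun {n} f x => hmk f x
        map_rel' := fun {_} _ _ _ => trivial }
    obtain ⟨n, ⟨e⟩⟩ := Finite.exists_equiv_fin (Quotient s)
    letI strF : L.Structure (Fin n) := transportStructure e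
    refine ⟨Fin n, inferInstance, ⊥, strF, ⟨rfl⟩, (transportHom e).comp φ₀, ?_, ?_⟩
    · exact @Continuous.comp A (Quotient s) (Fin n) _ _ ⊥ (Quotient.mk s) ⇑e
        (@continuous_of_discreteTopology _ _ _ _ ⊥ _) continuous_quotient_mk'
    · intro h
      have hq : Quotient.mk s a = Quotient.mk s b := e.injective h
      have := Quotient.exact hq 1 (one_mem _)
      exact hbK (this.1 haK)
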